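/- arXiv:1903.05332 — 2 statements merged into one kernel-verified Lean document; each statement's English description precedes it below -/
import Mathlib

section
/- Let D be a bipartite tournament with bipartition (V_1,V_2), \zeta(D) >= 1, sink sequence (W_0,...,W_{\zeta(D)}), and let \mathcal{W}_m = W_0 \cup ... \cup W_{m-1}. Then for every positive integer m < \zeta(D), each of V_1 \setminus \mathcal{W}_m and V_2 \setminus \mathcal{W}_m forms a clique in C^m(D). -/
/-- `walkN D n u v` : there is a directed walk of length `n` from `u` to `v` in the digraph `D`. -/
def walkN {V : Type*} (D : V → V → Prop) : ℕ → V → V → Prop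
  | 0 => fun u v => u = v
  | n+1 => fun u v => ∃ w, D u w ∧ walkN D n w v

/-- The `m`-step competition graph of the digraph `D`. -/
def cmGraph {V : Type*} (D : V → V → Prop) (m : ℕ) : SimpleGraph V where
  Adj u v := u ≠ v ∧ ∃ z, walkN D m u z ∧ walkN D m v z
  symm := by
    constructor
    intro u v h
    exact ⟨Ne.symm h.1, h.2.imp fun z hz => ⟨hz.2, hz.1⟩⟩
  loopless := by constructor; intro v h; exact h.1 rfl

/-- Sinks of the subdigraph of `D` induced by `S`. -/
def sinks {V : Type*} (D : V → V → Prop) (S : Set V) : Set V :=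
  {v ∈ S | ∀ w ∈ S, ¬ D v w}

/-- The digraph sequence `D_0, D_1, …` (as vertex sets) associated with the sink sequence. -/
def Dseq {V : Type*} (D : V → V → Prop) : ℕ → Set V
  | 0 => Set.univ
  | n+1 => Dseq D n \ sinks D (Dseq D n)

/-- The sink sequence `W_0, W_1, …` of `D`. -/
def Wseq {V : Type*} (D : V → V → Prop) (n : ℕ) : Set V := sinks D (Dseq D n)

/-- `k` is the sink elimination index `ζ(D)`. -/
def IsSinkElimIndex {V : Type*} (D : V → V → Prop) (k : ℕ) : Prop :=
  (Wseq D k = Dseq D k ∨ Wseq D k = ∅) ∧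
  ∀ j < k, Wseq D j ≠ Dseq D j ∧ Wseq D j ≠ ∅

/-- A digraph is acyclic iff it has no directed closed walk of positive length. -/
def DigraphAcyclic {V : Type*} (D : V → V → Prop) : Prop :=
  ∀ v : V, ∀ n : ℕ, 0 < n → ¬ walkN D n v v

/-- `D` is a bipartite tournament with bipartition `(V1, V2)`. -/
structure IsBipartiteTournament {V : Type*} (D : V → V → Prop) (V1 V2 : Set V) : Prop where
  nonempty1 : V1.Nonempty
  nonempty2 : V2.Nonempty
  union_eq : V1 ∪ V2 = Set.univ
  disj : V1 ∩ V2 = ∅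
  oriented : ∀ x ∈ V1, ∀ y ∈ V2, Xor' (D x y) (D y x)
  no_intra : ∀ x y, D x y → (x ∈ V1 ∧ y ∈ V2) ∨ (x ∈ V2 ∧ y ∈ V1)

/-- The competition graph sequence of `D` is eventually equal, starting from `q`. -/
def PeriodicFrom {V : Type*} (D : V → V → Prop) (q : ℕ) : Prop :=
  ∃ r, 0 < r ∧ ∀ i : ℕ, cmGraph D (q + i) = cmGraph D (q + r + i)

/-- `q` is the competition index of `D`. -/
def IsCindex {V : Type*} (D : V → V → Prop) (q : ℕ) : Prop :=
  0 < q ∧ PeriodicFrom D q ∧ ∀ q', 0 < q' → PeriodicFrom D q' → q ≤ q'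

/-- `p` is the competition period of `D`, given that `q` is its competition index. -/
def IsCperiod {V : Type*} (D : V → V → Prop) (q p : ℕ) : Prop :=
  0 < p ∧ cmGraph D q = cmGraph D (q + p) ∧
    ∀ p', 0 < p' → cmGraph D q = cmGraph D (q + p') → p ≤ p'


section AuxLemmas

variable {V : Type*}

lemma dseq_succ_sub (D : V → V → Prop) (n : ℕ) : Dseq D (n+1) ⊆ Dseq D n :=
  Set.diff_subset

lemma wseq_sub (D : V → V → Prop) (n : ℕ) : Wseq D n ⊆ Dseq D n :=
  fun _ hx => hx.1

lemma mem_dseq (D : V → V → Prop) (n : ℕ) (x : V) :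
    x ∈ Dseq D n ↔ ∀ i < n, x ∉ Wseq D i := by
  induction n with
  | zero => simp [Dseq]
  | succ n ih =>
    constructor
    · rintro ⟨h1, h2⟩ i hi
      rcases Nat.lt_succ_iff_lt_or_eq.mp hi with h | rfl
      · exact (ih.mp h1) i h
      · exact h2
    · intro h
      exact ⟨ih.mpr (fun i hi => h i (hi.trans (Nat.lt_succ_self n))),
        h n (Nat.lt_succ_self n)⟩

variable {D : V → V → Prop} {V1 V2 : Set V}

lemma IsBipartiteTournament.swap (hD : IsBipartiteTournament D V1 V2) :
    IsBipartiteTournament D V2 V1 :=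
  ⟨hD.nonempty2, hD.nonempty1,
    by rw [Set.union_comm]; exact hD.union_eq,
    by rw [Set.inter_comm]; exact hD.disj,
    fun x hx y hy => (hD.oriented y hy x hx).symm,
    fun x y h => (hD.no_intra x y h).symm⟩

lemma mem_one_side (hD : IsBipartiteTournament D V1 V2) (x : V) :
    (x ∈ V1 ∧ x ∉ V2) ∨ (x ∈ V2 ∧ x ∉ V1) := by
  have hx : x ∈ V1 ∪ V2 := by rw [hD.union_eq]; exact Set.mem_univ x
  have hdisj : ¬ (x ∈ V1 ∧ x ∈ V2) := by
    rintro ⟨h1, h2⟩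
    have : x ∈ V1 ∩ V2 := ⟨h1, h2⟩
    rw [hD.disj] at this
    exact this
  rcases hx with h | h
  · exact Or.inl ⟨h, fun h2 => hdisj ⟨h, h2⟩⟩
  · exact Or.inr ⟨h, fun h1 => hdisj ⟨h1, h⟩⟩

lemma arc_to_sink (hD : IsBipartiteTournament D V1 V2) {n : ℕ} {x w : V}
    (hx : x ∈ Dseq D n) (hw : w ∈ Wseq D n)
    (hopp : (x ∈ V1 ∧ w ∈ V2) ∨ (x ∈ V2 ∧ w ∈ V1)) : D x w := by
  have hnw : ¬ D w x := hw.2 x hx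
  rcases hopp with ⟨h1, h2⟩ | ⟨h1, h2⟩
  · rcases hD.oriented x h1 w h2 with ⟨h, _⟩ | ⟨h, _⟩
    · exact h
    · exact absurd h hnw
  · rcases hD.oriented w h2 x h1 with ⟨h, _⟩ | ⟨h, _⟩
    · exact absurd h hnw
    · exact h

lemma sinks_same_side (hD : IsBipartiteTournament D V1 V2) {n : ℕ} {x y : V}
    (hx : x ∈ Wseq D n) (hy : y ∈ Wseq D n) :
    ¬ ((x ∈ V1 ∧ y ∈ V2) ∨ (x ∈ V2 ∧ y ∈ V1)) := by
  rintro (⟨h1, h2⟩ | ⟨h1, h2⟩)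
  · rcases hD.oriented x h1 y h2 with ⟨h, _⟩ | ⟨h, _⟩
    · exact hx.2 y hy.1 h
    · exact hy.2 x hx.1 h
  · rcases hD.oriented y h2 x h1 with ⟨h, _⟩ | ⟨h, _⟩
    · exact hy.2 x hx.1 h
    · exact hx.2 y hy.1 h

lemma wseq_alt (hD : IsBipartiteTournament D V1 V2) {n : ℕ} {x y : V}
    (hx : x ∈ Wseq D n) (hy : y ∈ Wseq D (n+1)) :
    (x ∈ V1 ∧ y ∈ V2) ∨ (x ∈ V2 ∧ y ∈ V1) := by
  have hyD : y ∈ Dseq D (n+1) := hy.1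
  have hy1 : y ∈ Dseq D n := hyD.1
  have hy2 : y ∉ Wseq D n := hyD.2
  have hz : ∃ z ∈ Dseq D n, D y z := by
    by_contra h
    push_neg at h
    exact hy2 ⟨hy1, h⟩
  obtain ⟨z, hzD, hyz⟩ := hz
  rcases hD.no_intra y z hyz with ⟨hyV1, hzV2⟩ | ⟨hyV2, hzV1⟩
  · rcases mem_one_side hD x with ⟨hx1, _⟩ | ⟨hx1, _⟩
    · exfalso
      have hzW : z ∉ Wseq D n := fun hzW =>
        sinks_same_side hD hx hzW (Or.inl ⟨hx1, hzV2⟩)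
      exact hy.2 z ⟨hzD, hzW⟩ hyz
    · exact Or.inr ⟨hx1, hyV1⟩
  · rcases mem_one_side hD x with ⟨hx1, _⟩ | ⟨hx1, _⟩
    · exact Or.inl ⟨hx1, hyV2⟩
    · exfalso
      have hzW : z ∉ Wseq D n := fun hzW =>
        sinks_same_side hD hx hzW (Or.inr ⟨hx1, hzV1⟩)
      exact hy.2 z ⟨hzD, hzW⟩ hyz

lemma clique_aux (hD : IsBipartiteTournament D V1 V2)
    (k : ℕ) (hk : IsSinkElimIndex D k)
    (m : ℕ) (hm : 0 < m) (hmk : m < k) :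
    (cmGraph D m).IsClique (V1 \ ⋃ i ∈ Finset.range m, Wseq D i) := by
  obtain ⟨m', rfl⟩ : ∃ m', m = m' + 1 := ⟨m - 1, (Nat.succ_pred_eq_of_pos hm).symm⟩
  have hne : ∀ j ≤ m' + 1, (Wseq D j).Nonempty := fun j hj =>
    Set.nonempty_iff_ne_empty.mpr ((hk.2 j (lt_of_le_of_lt hj hmk)).2)
  classical
  set w : ℕ → V := fun j =>
    if h : (Wseq D j).Nonempty then h.some else hD.nonempty1.some with hwdef
  have hw : ∀ j, j ≤ m' + 1 → w j ∈ Wseq D j := by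
    intro j hj
    rw [hwdef]
    simp only [dif_pos (hne j hj)]
    exact (hne j hj).some_mem
  have chain : ∀ t i, i + t ≤ m' + 1 → walkN D t (w (i + t)) (w i) := by
    intro t
    induction t with
    | zero => intro i _; rfl
    | succ t ih =>
      intro i hle
      have h1 : w (i + t + 1) ∈ Wseq D (i + t + 1) := hw _ (by omega)
      have h2 : w (i + t) ∈ Wseq D (i + t) := hw _ (by omega)
      have hopp := wseq_alt hD h2 h1
      have harc : D (w (i + t + 1)) (w (i + t)) := by
        apply arc_to_sink hD (dseq_succ_sub D (i + t) h1.1) h2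
        tauto
      exact ⟨w (i + t), harc, ih i (by omega)⟩
  intro u hu v hv huv
  have huD : u ∈ Dseq D (m' + 1) := by
    rw [mem_dseq]
    intro i hi hmem
    exact hu.2 (Set.mem_iUnion₂.mpr ⟨i, Finset.mem_range.mpr hi, hmem⟩)
  have hvD : v ∈ Dseq D (m' + 1) := by
    rw [mem_dseq]
    intro i hi hmem
    exact hv.2 (Set.mem_iUnion₂.mpr ⟨i, Finset.mem_range.mpr hi, hmem⟩)
  have chain0 : walkN D m' (w m') (w 0) := by
    have h := chain m' 0 (by omega)
    rwa [Nat.zero_add] at h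
  have chain1 : walkN D m' (w (m' + 1)) (w 1) := by
    have h := chain m' 1 (by omega)
    rwa [Nat.add_comm 1 m'] at h
  rcases mem_one_side hD (w m') with ⟨hc1, hc2⟩ | ⟨hc1, hc2⟩
  · -- w m' ∈ V1: go through w (m'+1) ∈ V2, target w 1
    have halt := wseq_alt hD (hw m' (by omega)) (hw (m' + 1) le_rfl)
    have hwm1 : w (m' + 1) ∈ V2 := by
      rcases halt with ⟨_, h⟩ | ⟨h, _⟩
      · exact h
      · exact absurd h hc2
    refine ⟨huv, w 1, ?_, ?_⟩
    · exact ⟨w (m' + 1),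
        arc_to_sink hD huD (hw (m' + 1) le_rfl) (Or.inl ⟨hu.1, hwm1⟩), chain1⟩
    · exact ⟨w (m' + 1),
        arc_to_sink hD hvD (hw (m' + 1) le_rfl) (Or.inl ⟨hv.1, hwm1⟩), chain1⟩
  · -- w m' ∈ V2: first arc u → w m', target w 0
    refine ⟨huv, w 0, ?_, ?_⟩
    · exact ⟨w m',
        arc_to_sink hD (dseq_succ_sub D m' huD) (hw m' (by omega))
          (Or.inl ⟨hu.1, hc1⟩), chain0⟩
    · exact ⟨w m',
        arc_to_sink hD (dseq_succ_sub D m' hvD) (hw m' (by omega))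
          (Or.inl ⟨hv.1, hc1⟩), chain0⟩

end AuxLemmas

/-- In a bipartite tournament with `ζ(D) ≥ 1`, for every positive `m < ζ(D)`,
each of `V1 \ 𝒲_m` and `V2 \ 𝒲_m` forms a clique in `C^m(D)`, where
`𝒲_m = W_0 ∪ ⋯ ∪ W_{m-1}`. -/
theorem parts_minus_eliminated_form_cliques {V : Type*} [Fintype V] (D : V → V → Prop)
    (V1 V2 : Set V) (hD : IsBipartiteTournament D V1 V2)
    (k : ℕ) (hk : IsSinkElimIndex D k) (hk1 : 1 ≤ k)
    (m : ℕ) (hm : 0 < m) (hmk : m < k) :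
    (cmGraph D m).IsClique (V1 \ ⋃ i ∈ Finset.range m, Wseq D i) ∧
    (cmGraph D m).IsClique (V2 \ ⋃ i ∈ Finset.range m, Wseq D i) :=
  ⟨clique_aux hD k hk m hm hmk, clique_aux hD.swap k hk m hm hmk⟩
end

section
/- Let D be an acyclic bipartite tournament with sink sequence (W_0,...,W_{\zeta(D)}) and let m = \zeta(D) >= 1. Then C^m(D) is the disjoint union of a complete graph on W_{\zeta(D)} and isolated vertices on W_0 \cup ... \cup W_{m-1}; that is, two distinct vertices are adjacent in C^m(D) iff both lie in W_{\zeta(D)}. -/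
section Aux
variable {V : Type*} {D : V → V → Prop}

lemma walkN_zero (u v : V) : walkN D 0 u v ↔ u = v := Iff.rfl

lemma walkN_succ (n : ℕ) (u v : V) :
    walkN D (n+1) u v ↔ ∃ w, D u w ∧ walkN D n w v := Iff.rfl

lemma walkN_succ' : ∀ (n : ℕ) (u v : V),
    walkN D (n+1) u v ↔ ∃ w, walkN D n u w ∧ D w v
  | 0, u, v => by
    constructor
    · rintro ⟨w, h, rfl⟩; exact ⟨u, rfl, h⟩
    · rintro ⟨w, rfl, h⟩; exact ⟨v, h, rfl⟩
  | n+1, u, v => by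
    constructor
    · rintro ⟨a, hua, hav⟩
      obtain ⟨w, haw, hwv⟩ := (walkN_succ' n a v).1 hav
      exact ⟨w, ⟨a, hua, haw⟩, hwv⟩
    · rintro ⟨w, ⟨a, hua, haw⟩, hwv⟩
      exact ⟨a, hua, (walkN_succ' n a v).2 ⟨w, haw, hwv⟩⟩

lemma mem_sinks {S : Set V} {v : V} :
    v ∈ sinks D S ↔ v ∈ S ∧ ∀ w ∈ S, ¬ D v w := Iff.rfl

lemma sinks_subset (S : Set V) : sinks D S ⊆ S := fun _ h => h.1

lemma Dseq_succ_subset (n : ℕ) : Dseq D (n+1) ⊆ Dseq D n := Set.diff_subset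

lemma mem_Dseq_succ_of_edge : ∀ (j : ℕ) (x y : V), D x y → y ∈ Dseq D j → x ∈ Dseq D (j+1)
  | 0, x, y, hxy, _ => ⟨trivial, fun hx => hx.2 y trivial hxy⟩
  | j+1, x, y, hxy, hy => by
    have hx : x ∈ Dseq D (j+1) :=
      mem_Dseq_succ_of_edge j x y hxy (Dseq_succ_subset j hy)
    exact ⟨hx, fun hW => hW.2 y hy hxy⟩

lemma mem_Dseq_of_walk : ∀ (n : ℕ) (x y : V) (j : ℕ),
    walkN D n x y → y ∈ Dseq D j → x ∈ Dseq D (n + j)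
  | 0, x, y, j, h, hy => by rwa [Nat.zero_add, (walkN_zero x y).1 h]
  | n+1, x, y, j, h, hy => by
    obtain ⟨w, hxw, hwy⟩ := h
    have hw : w ∈ Dseq D (n + j) := mem_Dseq_of_walk n w y j hwy hy
    have := mem_Dseq_succ_of_edge (n + j) x w hxw hw
    convert this using 2
    omega

lemma exists_walk_of_mem_Dseq : ∀ (n : ℕ) (x : V), x ∈ Dseq D n → ∃ z, walkN D n x z
  | 0, x, _ => ⟨x, rfl⟩
  | n+1, x, hx => by
    obtain ⟨hxn, hxs⟩ := hx
    have : ∃ w ∈ Dseq D n, D x w := by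
      by_contra h
      push_neg at h
      exact hxs ⟨hxn, h⟩
    obtain ⟨w, hw, hxw⟩ := this
    obtain ⟨z, hz⟩ := exists_walk_of_mem_Dseq n w hw
    exact ⟨z, w, hxw, hz⟩

lemma sinks_nonempty [Fintype V] (hacyc : DigraphAcyclic D) (S : Set V)
    (hS : S.Nonempty) : (sinks D S).Nonempty := by
  by_contra h
  rw [Set.not_nonempty_iff_eq_empty] at h
  have hstep : ∀ v : S, ∃ w : S, D v w := by
    rintro ⟨v, hv⟩
    have : v ∉ sinks D S := by rw [h]; exact Set.notMem_empty v
    rw [mem_sinks] at this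
    push_neg at this
    obtain ⟨w, hw, hvw⟩ := this hv
    exact ⟨⟨w, hw⟩, hvw⟩
  choose g hg using hstep
  obtain ⟨v0, hv0⟩ := hS
  set x0 : S := ⟨v0, hv0⟩
  have hwalk : ∀ (n : ℕ) (x : S), walkN D n (x : V) ((g^[n] x : S) : V) := by
    intro n
    induction n with
    | zero => intro x; rfl
    | succ n ih =>
      intro x
      refine ⟨(g x : V), hg x, ?_⟩
      rw [Function.iterate_succ_apply]
      exact ih (g x)
  obtain ⟨i, j, hij, heq⟩ := Finite.exists_ne_map_eq_of_infinite (fun n : ℕ => g^[n] x0)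
  wlog hlt : i < j generalizing i j
  · exact this j i hij.symm heq.symm (by omega)
  set d := j - i with hd
  have hdpos : 0 < d := by omega
  have hiter : g^[d] (g^[i] x0) = g^[i] x0 := by
    rw [← Function.iterate_add_apply]
    have : d + i = j := by omega
    rw [this, ← heq]
  have := hwalk d (g^[i] x0)
  rw [hiter] at this
  exact hacyc _ d hdpos this

end Aux

/-- For an acyclic bipartite tournament with `m = ζ(D) ≥ 1`, two distinct
vertices are adjacent in `C^m(D)` iff both lie in `W_{ζ(D)}`; all other vertices are
isolated. -/
theorem cmGraph_at_zeta {V : Type*} [Fintype V] (D : V → V → Prop)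
    (V1 V2 : Set V) (hD : IsBipartiteTournament D V1 V2)
    (hacyc : DigraphAcyclic D)
    (k : ℕ) (hk : IsSinkElimIndex D k) (hk1 : 1 ≤ k) :
    ∀ u v : V, (cmGraph D k).Adj u v ↔ u ≠ v ∧ u ∈ Wseq D k ∧ v ∈ Wseq D k := by
  obtain ⟨k', rfl⟩ : ∃ k', k = k' + 1 := ⟨k - 1, by omega⟩
  set k := k' + 1
  -- D_k is nonempty
  have hDkne : (Dseq D k).Nonempty := by
    rw [Set.nonempty_iff_ne_empty]
    intro h
    have h1 : Dseq D k' \ sinks D (Dseq D k') = ∅ := h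
    have h2 : Dseq D k' ⊆ sinks D (Dseq D k') := by
      rw [Set.diff_eq_empty] at h1; exact h1
    have := (hk.2 k' (by omega)).1
    exact this (le_antisymm (sinks_subset _) h2)
  -- W_k = D_k
  have hWD : Wseq D k = Dseq D k := by
    rcases hk.1 with h | h
    · exact h
    · exact absurd h (Set.nonempty_iff_ne_empty.1 (sinks_nonempty hacyc _ hDkne))
  -- D_{k+1} = ∅
  have hDk1 : Dseq D (k+1) = ∅ := by
    show Dseq D k \ sinks D (Dseq D k) = ∅
    rw [show sinks D (Dseq D k) = Wseq D k from rfl, hWD, Set.diff_self]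
  -- endpoints of length-k walks are global sinks
  have hsink : ∀ x z : V, walkN D k x z → ∀ w, ¬ D z w := by
    intro x z hxz w hzw
    have hz1 : z ∈ Dseq D 1 := mem_Dseq_succ_of_edge 0 z w hzw trivial
    have : x ∈ Dseq D (k + 1) := mem_Dseq_of_walk k x z 1 hxz hz1
    rw [hDk1] at this
    exact this
  have hmem : ∀ x : V, x ∈ V1 ∨ x ∈ V2 := by
    intro x
    have : x ∈ V1 ∪ V2 := hD.union_eq.symm ▸ Set.mem_univ x
    exact this
  intro u v
  constructor
  · rintro ⟨hne, z, hu, hv⟩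
    have hu' : u ∈ Dseq D (k + 0) := mem_Dseq_of_walk k u z 0 hu trivial
    have hv' : v ∈ Dseq D (k + 0) := mem_Dseq_of_walk k v z 0 hv trivial
    rw [Nat.add_zero] at hu' hv'
    rw [hWD]
    exact ⟨hne, hu', hv'⟩
  · rintro ⟨hne, hu, hv⟩
    rw [hWD] at hu hv
    obtain ⟨z, hz⟩ := exists_walk_of_mem_Dseq k u hu
    obtain ⟨zv, hzv⟩ := exists_walk_of_mem_Dseq k v hv
    have hzsink : ∀ w, ¬ D z w := hsink u z hz
    have hzvsink : ∀ w, ¬ D zv w := hsink v zv hzv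
    obtain ⟨y, hvy, hyzv⟩ := (walkN_succ' k' v zv).1 hzv
    -- we claim D y z
    have hyz : D y z := by
      rcases hD.no_intra y zv hyzv with ⟨hy1, hzv2⟩ | ⟨hy2, hzv1⟩
      · -- y ∈ V1, zv ∈ V2; show z ∈ V2
        have hz2 : z ∈ V2 := by
          rcases hmem z with hz1 | hz2
          · rcases hD.oriented z hz1 zv hzv2 with ⟨h, _⟩ | ⟨h, _⟩
            · exact absurd h (hzsink zv)
            · exact absurd h (hzvsink z)
          · exact hz2
        rcases hD.oriented y hy1 z hz2 with ⟨h, _⟩ | ⟨h, _⟩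
        · exact h
        · exact absurd h (hzsink y)
      · -- y ∈ V2, zv ∈ V1; show z ∈ V1
        have hz1 : z ∈ V1 := by
          rcases hmem z with hz1 | hz2
          · exact hz1
          · rcases hD.oriented zv hzv1 z hz2 with ⟨h, _⟩ | ⟨h, _⟩
            · exact absurd h (hzvsink z)
            · exact absurd h (hzsink zv)
        rcases hD.oriented z hz1 y hy2 with ⟨h, _⟩ | ⟨h, _⟩
        · exact absurd h (hzsink y)
        · exact h
    exact ⟨hne, z, hz, (walkN_succ' k' v z).2 ⟨y, hvy, hyz⟩⟩
end
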